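/- Let V be a finite-dimensional real vector space and B a nondegenerate symmetric bilinear form on V which is positive definite on some 2-dimensional subspace of V. Let C be a countable subset of V. Then there exists a 2-dimensional subspace P of V such that B restricted to P is positive definite and such that no nonzero element of C is B-orthogonal to all of P; that is, for every t ∈ C with t ≠ 0 there exists x ∈ P with B(x, t) ≠ 0. -/

import Mathlib

open MeasureTheory Module

lemma stmt12_aux_pos {V : Type} [AddCommGroup V] [Module ℝ V]
    (B : V →ₗ[ℝ] V →ₗ[ℝ] ℝ) (hsymm : ∀ x y : V, B x y = B y x)
    {u v : V} (h1 : 0 < B u u)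
    (h2 : 0 < B u u * B v v - (B u v) ^ 2)
    (s t : ℝ) (hst : ¬(s = 0 ∧ t = 0)) :
    0 < B (s • u + t • v) (s • u + t • v) := by
  have expand : B (s • u + t • v) (s • u + t • v)
      = s ^ 2 * B u u + 2 * s * t * B u v + t ^ 2 * B v v := by
    simp only [map_add, _root_.map_smul, LinearMap.add_apply, LinearMap.smul_apply, smul_eq_mul]
    rw [hsymm v u]; ring
  rw [expand]
  rcases eq_or_ne t 0 with rfl | ht
  · have hs : s ≠ 0 := by tauto
    have : 0 < s ^ 2 := by positivity
    nlinarith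
  · have h3 : 0 < t ^ 2 := by positivity
    nlinarith [sq_nonneg (s * B u u + t * B u v)]

lemma stmt12_aux_plane {V : Type} [AddCommGroup V] [Module ℝ V]
    (B : V →ₗ[ℝ] V →ₗ[ℝ] ℝ) (hsymm : ∀ x y : V, B x y = B y x)
    {u v : V} (h1 : 0 < B u u)
    (h2 : 0 < B u u * B v v - (B u v) ^ 2) :
    Module.finrank ℝ (Submodule.span ℝ ({u, v} : Set V)) = 2 ∧
      ∀ x ∈ Submodule.span ℝ ({u, v} : Set V), x ≠ 0 → 0 < B x x := by
  have hind : LinearIndependent ℝ ![u, v] := by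
    rw [LinearIndependent.pair_iff]
    intro s t hstv
    by_contra hst
    have := stmt12_aux_pos B hsymm h1 h2 s t hst
    rw [hstv] at this
    simp at this
  constructor
  · have h := finrank_span_eq_card hind
    rw [show Set.range ![u, v] = ({u, v} : Set V) by
      simp [Matrix.range_cons, Matrix.range_empty, Set.pair_comm]] at h
    simpa using h
  · intro x hx hx0
    obtain ⟨s, t, rfl⟩ := Submodule.mem_span_pair.mp hx
    refine stmt12_aux_pos B hsymm h1 h2 s t ?_
    rintro ⟨rfl, rfl⟩
    simp at hx0

lemma stmt12_open (n : ℕ) (Gc : (Fin n → ℝ) →L[ℝ] (Fin n → ℝ) →L[ℝ] ℝ) :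
    IsOpen {p : (Fin n → ℝ) × (Fin n → ℝ) |
      0 < Gc p.1 p.1 ∧ 0 < Gc p.1 p.1 * Gc p.2 p.2 - (Gc p.1 p.2) ^ 2} := by
  have hGcont : Continuous fun p : (Fin n → ℝ) × (Fin n → ℝ) => Gc p.1 p.2 := Gc.continuous₂
  have c11 : Continuous fun p : (Fin n → ℝ) × (Fin n → ℝ) => Gc p.1 p.1 :=
    hGcont.comp (continuous_fst.prodMk continuous_fst)
  have c22 : Continuous fun p : (Fin n → ℝ) × (Fin n → ℝ) => Gc p.2 p.2 :=
    hGcont.comp (continuous_snd.prodMk continuous_snd)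
  exact (isOpen_lt continuous_const c11).inter
    (isOpen_lt continuous_const ((c11.mul c22).sub (hGcont.pow 2)))

lemma stmt12_baire {V : Type} (n : ℕ) (U : Set ((Fin n → ℝ) × (Fin n → ℝ)))
    (hU : IsOpen U) (hne : U.Nonempty)
    (C' : Set V) (hC' : C'.Countable)
    (S : V → Submodule ℝ ((Fin n → ℝ) × (Fin n → ℝ)))
    (hS : ∀ t ∈ C', S t ≠ ⊤) :
    ∃ p ∈ U, ∀ t ∈ C', p ∉ S t := by
  have hHaar : Measure.IsAddHaarMeasure (volume : Measure ((Fin n → ℝ) × (Fin n → ℝ))) := by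
    rw [show (volume : Measure ((Fin n → ℝ) × (Fin n → ℝ)))
        = Measure.prod volume volume from rfl]
    exact Measure.prod.instIsAddHaarMeasure _ _
  have hbadnull : volume (⋃ t ∈ C', (S t : Set ((Fin n → ℝ) × (Fin n → ℝ)))) = 0 := by
    refine (measure_biUnion_null_iff hC').mpr fun t ht => ?_
    exact Measure.addHaar_submodule volume (S t) (hS t ht)
  have hUpos : 0 < volume U := hU.measure_pos volume hne
  have hnotsub : ¬U ⊆ ⋃ t ∈ C', (S t : Set ((Fin n → ℝ) × (Fin n → ℝ))) := by
    intro h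
    exact hUpos.ne' (le_antisymm (hbadnull ▸ measure_mono h) zero_le)
  obtain ⟨p, hpU, hpbad⟩ := Set.not_subset.mp hnotsub
  exact ⟨p, hpU, fun t ht hmem => hpbad (Set.mem_biUnion ht hmem)⟩

theorem stmt_12 (V : Type) [AddCommGroup V] [Module ℝ V] [FiniteDimensional ℝ V]
    (B : V →ₗ[ℝ] V →ₗ[ℝ] ℝ)
    (hsymm : ∀ x y : V, B x y = B y x)
    (hnd : ∀ x : V, (∀ y : V, B x y = 0) → x = 0)
    (hpos : ∃ W : Submodule ℝ V, Module.finrank ℝ W = 2 ∧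
      ∀ x ∈ W, x ≠ 0 → 0 < B x x)
    (C : Set V) (hC : C.Countable) :
    ∃ P : Submodule ℝ V, Module.finrank ℝ P = 2 ∧
      (∀ x ∈ P, x ≠ 0 → 0 < B x x) ∧
      ∀ t ∈ C, t ≠ 0 → ∃ x ∈ P, B x t ≠ 0 := by
  classical
  obtain ⟨W, hW2, hWpos⟩ := hpos
  -- two good vectors in W
  have hbasis : ∃ a b : V, 0 < B a a ∧ 0 < B a a * B b b - (B a b) ^ 2 := by
    let bW : Basis (Fin 2) ℝ W := Module.finBasisOfFinrankEq ℝ W hW2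
    refine ⟨(bW 0 : V), (bW 1 : V), ?_, ?_⟩
    · exact hWpos _ (bW 0).2 fun h => bW.ne_zero 0 (Subtype.ext h)
    · set a : V := (bW 0 : V)
      set b : V := (bW 1 : V)
      have hBaa : 0 < B a a :=
        hWpos _ (bW 0).2 fun h => bW.ne_zero 0 (Subtype.ext h)
      set c : V := B a a • b - B a b • a with hc_def
      have hcW : c ∈ W := W.sub_mem (W.smul_mem _ (bW 1).2) (W.smul_mem _ (bW 0).2)
      have hc0 : c ≠ 0 := by
        intro h
        have h' : (B a a • bW 1 - B a b • bW 0 : W) = 0 := by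
          apply Subtype.ext
          simpa [hc_def] using h
        have := congrArg (fun w => bW.repr w 1) h'
        simp [Basis.repr_self, Finsupp.single_apply] at this
        exact hBaa.ne' this
      have hBcc : 0 < B c c := hWpos c hcW hc0
      have hexp : B c c = B a a * (B a a * B b b - (B a b) ^ 2) := by
        simp only [hc_def, map_sub, _root_.map_smul, LinearMap.sub_apply,
          LinearMap.smul_apply, smul_eq_mul]
        rw [hsymm b a]; ring
      rw [hexp] at hBcc
      nlinarith [hBcc, hBaa]
  obtain ⟨a, b, hBaa, hgram⟩ := hbasis
  -- transport to E = Fin n → ℝ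
  let e : V ≃ₗ[ℝ] (Fin (Module.finrank ℝ V) → ℝ) := (Module.finBasis ℝ V).equivFun
  let Gc : (Fin (Module.finrank ℝ V) → ℝ) →L[ℝ] (Fin (Module.finrank ℝ V) → ℝ) →L[ℝ] ℝ :=
    LinearMap.toContinuousLinearMap
      ((LinearMap.toContinuousLinearMap :
        ((Fin (Module.finrank ℝ V) → ℝ) →ₗ[ℝ] ℝ) ≃ₗ[ℝ]
          ((Fin (Module.finrank ℝ V) → ℝ) →L[ℝ] ℝ)).toLinearMap.comp
        (B.compl₁₂ e.symm.toLinearMap e.symm.toLinearMap))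
  have hGc : ∀ x y, Gc x y = B (e.symm x) (e.symm y) := fun x y => rfl
  have hUopen := stmt12_open (Module.finrank ℝ V) Gc
  have hUne : (e a, e b) ∈ {p : (Fin (Module.finrank ℝ V) → ℝ) × (Fin (Module.finrank ℝ V) → ℝ) |
      0 < Gc p.1 p.1 ∧ 0 < Gc p.1 p.1 * Gc p.2 p.2 - (Gc p.1 p.2) ^ 2} := by
    constructor
    · simpa only [hGc, LinearEquiv.symm_apply_apply] using hBaa
    · simpa only [hGc, LinearEquiv.symm_apply_apply] using hgram
  -- bad subspaces
  have horth : ∀ t : V, t ≠ 0 → ∃ y : V, B y t ≠ 0 := by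
    intro t ht
    by_contra h
    push_neg at h
    exact ht (hnd t fun y => by rw [hsymm]; exact h y)
  let K : V → Submodule ℝ (Fin (Module.finrank ℝ V) → ℝ) := fun t =>
    LinearMap.ker ((B.flip t).comp e.symm.toLinearMap)
  have hKmem : ∀ t x, x ∈ K t ↔ B (e.symm x) t = 0 := by
    intro t x
    simp [K, LinearMap.mem_ker]
  let S : V → Submodule ℝ
      ((Fin (Module.finrank ℝ V) → ℝ) × (Fin (Module.finrank ℝ V) → ℝ)) := fun t =>
    (K t).prod (K t)
  have hC' : {t ∈ C | t ≠ 0}.Countable := hC.mono (Set.sep_subset _ _)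
  have hSne : ∀ t ∈ {t ∈ C | t ≠ 0}, S t ≠ ⊤ := by
    rintro t ⟨-, ht⟩ htop
    obtain ⟨y, hy⟩ := horth t ht
    have hmem : (e y, e y) ∈ S t := htop ▸ Submodule.mem_top
    have h1 : e y ∈ K t := hmem.1
    rw [hKmem, LinearEquiv.symm_apply_apply] at h1
    exact hy h1
  obtain ⟨p, hpU, hpbad⟩ := stmt12_baire (Module.finrank ℝ V) _ hUopen ⟨_, hUne⟩
    {t ∈ C | t ≠ 0} hC' S hSne
  -- conclude
  have h1 : 0 < B (e.symm p.1) (e.symm p.1) := by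
    have := hpU.1; rwa [hGc] at this
  have h2 : 0 < B (e.symm p.1) (e.symm p.1) * B (e.symm p.2) (e.symm p.2)
      - (B (e.symm p.1) (e.symm p.2)) ^ 2 := by
    have := hpU.2; rwa [hGc, hGc, hGc] at this
  obtain ⟨hrank, hposdef⟩ := stmt12_aux_plane B hsymm h1 h2
  refine ⟨Submodule.span ℝ ({e.symm p.1, e.symm p.2} : Set V), hrank, hposdef, ?_⟩
  intro t htC ht0
  have hpSt : ¬(p.1 ∈ K t ∧ p.2 ∈ K t) := fun h =>
    hpbad t ⟨htC, ht0⟩ (Submodule.mem_prod.mpr h)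
  rcases not_and_or.mp hpSt with h | h
  · exact ⟨e.symm p.1, Submodule.subset_span (by simp), fun hz => h ((hKmem t p.1).mpr hz)⟩
  · exact ⟨e.symm p.2, Submodule.subset_span (by simp), fun hz => h ((hKmem t p.2).mpr hz)⟩
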